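/- Let |Ψ⟩ = 2^{-n/2} Σ e^{iβ_x} |x⟩ (x ∈ {0,1}^n, β_x ∈ ℝ) be a locally maximally entanglable (LME) state written as |Ψ⟩ = U|+⟩^{⊗n} with U diagonal unitary. Then the operators S_k = U σ₁^{(k)} U† (k = 1,…,n) are Hermitian, unitary, pairwise commuting, and satisfy S_k σ₃^{i}|Ψ⟩ = (-1)^{i_k} σ₃^{i}|Ψ⟩ for all i ∈ {0,1}^n, where σ₃^{i} = σ₃^{i₁}⊗…⊗σ₃^{iₙ}. In particular { σ₃^{i}|Ψ⟩ : i ∈ {0,1}^n } is an orthonormal basis of (ℂ²)^{⊗n}. -/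

import Mathlib

open Matrix Complex

noncomputable section

def σ : Fin 4 → Matrix (Fin 2) (Fin 2) ℂ
  | 0 => 1
  | 1 => !![0, 1; 1, 0]
  | 2 => !![0, -Complex.I; Complex.I, 0]
  | 3 => !![1, 0; 0, -1]

def pauliString (n : ℕ) (j : Fin n → Fin 4) :
    Matrix (Fin n → Fin 2) (Fin n → Fin 2) ℂ :=
  Matrix.of fun x y => ∏ i, σ (j i) (x i) (y i)

/-- `σ₁^{(k)}`: `σ₁` on tensor factor `k`, identity elsewhere. -/
def sigma1At (n : ℕ) (k : Fin n) : Matrix (Fin n → Fin 2) (Fin n → Fin 2) ℂ :=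
  pauliString n fun i => if i = k then 1 else 0

/-- `σ₃^{i} = σ₃^{i₁}⊗…⊗σ₃^{iₙ}` for a bitstring `i`. -/
def sigma3Str (n : ℕ) (i : Fin n → Fin 2) : Matrix (Fin n → Fin 2) (Fin n → Fin 2) ℂ :=
  pauliString n fun k => if i k = 1 then 3 else 0

/-- `|+⟩^{⊗n}`. -/
def plusN (n : ℕ) : (Fin n → Fin 2) → ℂ := fun _ => (Real.sqrt 2 : ℂ)⁻¹ ^ n

namespace GenStab

variable {n : ℕ}

lemma fin2_add_one_add_one (a : Fin 2) : a + 1 + 1 = a := by fin_cases a <;> rfl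

def flip (k : Fin n) (x : Fin n → Fin 2) : Fin n → Fin 2 := Function.update x k (x k + 1)

lemma flip_apply_self (k : Fin n) (x) : flip k x k = x k + 1 := by
  simp [flip]

lemma flip_apply_ne {k i : Fin n} (h : i ≠ k) (x) : flip k x i = x i := by
  simp [flip, Function.update_of_ne h]

lemma flip_flip (k : Fin n) (x) : flip k (flip k x) = x := by
  funext i
  by_cases h : i = k
  · subst h; rw [flip_apply_self, flip_apply_self, fin2_add_one_add_one]
  · rw [flip_apply_ne h, flip_apply_ne h]

lemma flip_eq_iff {k : Fin n} {x y} : y = flip k x ↔ x = flip k y := by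
  constructor <;> rintro rfl <;> rw [flip_flip]

lemma sigma1At_apply (k : Fin n) (x y) :
    sigma1At n k x y = if y = flip k x then 1 else 0 := by
  rw [sigma1At, pauliString]
  show ∏ i, σ (if i = k then 1 else 0) (x i) (y i) = _
  split_ifs with h
  · subst h
    apply Finset.prod_eq_one
    intro i _
    by_cases hik : i = k
    · subst hik
      rw [if_pos rfl, flip_apply_self]
      revert x; intro x
      have : ∀ a b : Fin 2, b = a + 1 → σ 1 a b = 1 := by
        intro a b h; fin_cases a <;> fin_cases b <;> simp_all [σ]
      exact this _ _ rfl
    · rw [if_neg hik, flip_apply_ne hik]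
      have : ∀ a : Fin 2, σ 0 a a = 1 := by
        intro a; fin_cases a <;> simp [σ]
      exact this _
  · have : ∃ i, y i ≠ flip k x i := by
      by_contra hc
      push_neg at hc
      exact h (funext hc)
    obtain ⟨i, hi⟩ := this
    apply Finset.prod_eq_zero (Finset.mem_univ i)
    by_cases hik : i = k
    · subst hik
      rw [if_pos rfl]
      rw [flip_apply_self] at hi
      have hy : y i = x i := by omega
      rw [hy]
      have : ∀ a : Fin 2, σ 1 a a = 0 := by
        intro a; fin_cases a <;> simp [σ]
      exact this _
    · rw [if_neg hik]
      rw [flip_apply_ne hik] at hi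
      have : ∀ a b : Fin 2, a ≠ b → σ 0 a b = 0 := by
        intro a b h; fin_cases a <;> fin_cases b <;> simp_all [σ]
      exact this _ _ (Ne.symm hi)

lemma sigma1At_mul (k : Fin n) (A : Matrix (Fin n → Fin 2) (Fin n → Fin 2) ℂ) (x y) :
    (sigma1At n k * A) x y = A (flip k x) y := by
  rw [Matrix.mul_apply]
  rw [Finset.sum_eq_single (flip k x)]
  · rw [sigma1At_apply, if_pos rfl, one_mul]
  · intro z _ hz
    rw [sigma1At_apply]
    rw [if_neg hz, zero_mul]
  · simp

lemma mul_sigma1At (k : Fin n) (A : Matrix (Fin n → Fin 2) (Fin n → Fin 2) ℂ) (x y) :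
    (A * sigma1At n k) x y = A x (flip k y) := by
  rw [Matrix.mul_apply]
  rw [Finset.sum_eq_single (flip k y)]
  · rw [sigma1At_apply, if_pos (flip_eq_iff.mpr rfl), mul_one]
  · intro z _ hz
    rw [sigma1At_apply, if_neg (fun hc => hz (flip_eq_iff.mp hc)), mul_zero]
  · simp

lemma sigma1At_mulVec (k : Fin n) (v : (Fin n → Fin 2) → ℂ) (x) :
    (sigma1At n k).mulVec v x = v (flip k x) := by
  rw [Matrix.mulVec, dotProduct]
  rw [Finset.sum_eq_single (flip k x)]
  · rw [sigma1At_apply, if_pos rfl, one_mul]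
  · intro z _ hz
    rw [sigma1At_apply, if_neg hz, zero_mul]
  · simp

def sgn (i x : Fin n → Fin 2) : ℂ := ∏ k, (if i k = 1 ∧ x k = 1 then (-1 : ℂ) else 1)

lemma sigma3Str_eq (i : Fin n → Fin 2) :
    sigma3Str n i = Matrix.diagonal (sgn i) := by
  ext x y
  rw [sigma3Str, pauliString]
  show ∏ k, σ (if i k = 1 then 3 else 0) (x k) (y k) = _
  by_cases h : x = y
  · subst h
    rw [Matrix.diagonal_apply_eq, sgn]
    apply Finset.prod_congr rfl
    intro k _
    have : ∀ (c : Fin 4) (a : Fin 2), (c = 0 ∨ c = 3) →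
        σ c a a = if c = 3 ∧ a = 1 then -1 else 1 := by
      intro c a h; rcases h with h | h <;> subst h <;> fin_cases a <;> simp [σ]
    by_cases hik : i k = 1 <;> simp [hik, this]
  · rw [Matrix.diagonal_apply_ne _ h]
    have : ∃ k, x k ≠ y k := by
      by_contra hc; push_neg at hc; exact h (funext hc)
    obtain ⟨k, hk⟩ := this
    apply Finset.prod_eq_zero (Finset.mem_univ k)
    have : ∀ (c : Fin 4) (a b : Fin 2), (c = 0 ∨ c = 3) → a ≠ b → σ c a b = 0 := by
      intro c a b h hab
      rcases h with h | h <;> subst h <;> fin_cases a <;> fin_cases b <;> simp_all [σ]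
    by_cases hik : i k = 1 <;> simp [hik] <;> exact this _ _ _ (by simp) hk

lemma star_sgn (i x : Fin n → Fin 2) : star (sgn i x) = sgn i x := by
  rw [sgn, star_prod]
  apply Finset.prod_congr rfl
  intro k _
  split_ifs <;> simp

lemma sgn_mul_self (i x : Fin n → Fin 2) : sgn i x * sgn i x = 1 := by
  rw [sgn, ← Finset.prod_mul_distrib]
  apply Finset.prod_eq_one
  intro k _
  split_ifs <;> ring

lemma sgn_flip (i x : Fin n → Fin 2) (k : Fin n) :
    sgn i (flip k x) = (-1 : ℂ) ^ (i k : ℕ) * sgn i x := by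
  rw [sgn, sgn, ← Finset.mul_prod_erase _ _ (Finset.mem_univ k),
    ← Finset.mul_prod_erase _ (fun k => if i k = 1 ∧ x k = 1 then (-1 : ℂ) else 1)
      (Finset.mem_univ k), ← mul_assoc]
  congr 1
  · rw [flip_apply_self]
    have h2 : (i k : ℕ) < 2 := (i k).isLt
    interval_cases h : (i k : ℕ)
    · have : i k = 0 := by omega
      simp [this]
    · have : i k = 1 := by omega
      have hx : x k + 1 = 1 ↔ ¬ (x k = 1) := by
        have : ∀ a : Fin 2, (a + 1 = 1 ↔ ¬ (a = 1)) := by decide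
        exact this _
      by_cases hxk : x k = 1 <;> simp [this, hx, hxk]
  · apply Finset.prod_congr rfl
    intro j hj
    rw [flip_apply_ne (Finset.mem_erase.mp hj).1]

end GenStab

namespace GenStab

lemma flip_comm (k k' : Fin n) (x : Fin n → Fin 2) :
    flip k' (flip k x) = flip k (flip k' x) := by
  rcases eq_or_ne k k' with rfl | h
  · rfl
  · funext i
    by_cases h1 : i = k'
    · subst h1
      simp only [flip_apply_self, flip_apply_ne (Ne.symm h)]
    · by_cases h2 : i = k
      · subst h2
        simp only [flip_apply_self, flip_apply_ne h]
      · simp only [flip_apply_ne h1, flip_apply_ne h2]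

lemma sigma1At_conjTranspose (k : Fin n) : (sigma1At n k)ᴴ = sigma1At n k := by
  ext x y
  rw [Matrix.conjTranspose_apply, sigma1At_apply, sigma1At_apply]
  by_cases h : y = flip k x
  · rw [if_pos h, if_pos (flip_eq_iff.mpr h), star_one]
  · rw [if_neg h, if_neg (fun hc => h (flip_eq_iff.mp hc)), star_zero]

lemma sigma1At_mul_self (k : Fin n) : sigma1At n k * sigma1At n k = 1 := by
  ext x y
  rw [sigma1At_mul, sigma1At_apply, flip_flip, Matrix.one_apply]
  by_cases h : y = x
  · rw [if_pos h, if_pos h.symm]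
  · rw [if_neg h, if_neg (fun hc => h hc.symm)]

lemma sigma1At_mem_unitary (k : Fin n) :
    sigma1At n k ∈ Matrix.unitaryGroup (Fin n → Fin 2) ℂ := by
  constructor <;>
    rw [Matrix.star_eq_conjTranspose, sigma1At_conjTranspose, sigma1At_mul_self]

lemma sigma1At_comm (k k' : Fin n) :
    sigma1At n k * sigma1At n k' = sigma1At n k' * sigma1At n k := by
  ext x y
  rw [sigma1At_mul, sigma1At_mul, sigma1At_apply, sigma1At_apply, flip_comm]

end GenStab

open GenStab in
/-- For an LME state `|Ψ⟩ = U|+⟩^{⊗n}` with `U` diagonal unitary, the generalized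
stabilizer operators `S_k = U σ₁^{(k)} U†` are Hermitian, unitary, pairwise commuting and
satisfy `S_k σ₃^{i}|Ψ⟩ = (-1)^{i_k} σ₃^{i}|Ψ⟩`; the states `σ₃^{i}|Ψ⟩` form an
orthonormal basis of `(ℂ²)^{⊗n}`. -/
theorem generalized_stabilizer_of_LME_state (n : ℕ)
    (U : Matrix (Fin n → Fin 2) (Fin n → Fin 2) ℂ)
    (hdiag : U.IsDiag) (hU : U ∈ Matrix.unitaryGroup (Fin n → Fin 2) ℂ) :
    (∀ k, (U * sigma1At n k * Uᴴ)ᴴ = U * sigma1At n k * Uᴴ) ∧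
    (∀ k, U * sigma1At n k * Uᴴ ∈ Matrix.unitaryGroup (Fin n → Fin 2) ℂ) ∧
    (∀ k k', (U * sigma1At n k * Uᴴ) * (U * sigma1At n k' * Uᴴ) =
      (U * sigma1At n k' * Uᴴ) * (U * sigma1At n k * Uᴴ)) ∧
    (∀ (k : Fin n) (i : Fin n → Fin 2),
      (U * sigma1At n k * Uᴴ).mulVec ((sigma3Str n i).mulVec (U.mulVec (plusN n))) =
        ((-1 : ℂ) ^ (i k : ℕ)) • (sigma3Str n i).mulVec (U.mulVec (plusN n))) ∧
    Orthonormal ℂ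
      (fun i : Fin n → Fin 2 =>
        (WithLp.equiv 2 ((Fin n → Fin 2) → ℂ)).symm ((sigma3Str n i).mulVec (U.mulVec (plusN n)))) ∧
    Submodule.span ℂ
        (Set.range fun i : Fin n → Fin 2 =>
          (WithLp.equiv 2 ((Fin n → Fin 2) → ℂ)).symm ((sigma3Str n i).mulVec (U.mulVec (plusN n)))) = ⊤ := by
  -- diagonal structure of U
  set u : (Fin n → Fin 2) → ℂ := fun x => U x x with hu
  have hUeq : U = Matrix.diagonal u := by
    ext x y
    by_cases h : x = y
    · subst h; rw [Matrix.diagonal_apply_eq]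
    · rw [Matrix.diagonal_apply_ne _ h]; exact hdiag h
  have hUH : Uᴴ = Matrix.diagonal (fun x => star (u x)) := by
    rw [hUeq, Matrix.diagonal_conjTranspose]; rfl
  have hU1 : Uᴴ * U = 1 := by
    rw [← Matrix.star_eq_conjTranspose]; exact hU.1
  have hU2 : U * Uᴴ = 1 := by
    rw [← Matrix.star_eq_conjTranspose]; exact hU.2
  have hnorm : ∀ x, star (u x) * u x = 1 := by
    intro x
    have h1 := hU1
    rw [hUH, hUeq, Matrix.diagonal_mul_diagonal] at h1
    have := congr_fun (congr_fun h1 x) x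
    simpa using this
  -- the vector Ψ and its pointwise description
  set c : ℂ := (Real.sqrt 2 : ℂ)⁻¹ ^ n with hc
  have hΨ : ∀ x, U.mulVec (plusN n) x = u x * c := by
    intro x; rw [hUeq, Matrix.mulVec_diagonal]; rfl
  have hv : ∀ i x, (sigma3Str n i).mulVec (U.mulVec (plusN n)) x = sgn i x * (u x * c) := by
    intro i x
    rw [sigma3Str_eq, Matrix.mulVec_diagonal, hΨ]
  have hstarc : star c = c := by
    rw [hc, star_pow, star_inv₀, Complex.star_def, Complex.conj_ofReal]
  have horth : Orthonormal ℂ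
      (fun i : Fin n → Fin 2 =>
        (WithLp.equiv 2 ((Fin n → Fin 2) → ℂ)).symm ((sigma3Str n i).mulVec (U.mulVec (plusN n)))) := by
    rw [orthonormal_iff_ite]
    intro i j
    simp only [PiLp.inner_apply, WithLp.equiv_symm_apply, WithLp.ofLp_toLp, RCLike.inner_apply]
    have hterm : ∀ x, (starRingEnd ℂ) ((sigma3Str n i).mulVec (U.mulVec (plusN n)) x) *
        (sigma3Str n j).mulVec (U.mulVec (plusN n)) x
        = sgn i x * sgn j x * (c * c) := by
      intro x
      rw [hv, hv]
      rw [show (starRingEnd ℂ) (sgn i x * (u x * c)) = star (sgn i x) * (star (u x) * star c) by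
        simp only [_root_.map_mul]; rfl, star_sgn, hstarc]
      rw [show sgn i x * (star (u x) * c) * (sgn j x * (u x * c))
          = sgn i x * sgn j x * (c * c) * (star (u x) * u x) by ring, hnorm, mul_one]
    rw [Finset.sum_congr rfl (fun x _ => (mul_comm _ _).trans (hterm x)), ← Finset.sum_mul]
    have hsum : (∑ x : Fin n → Fin 2, sgn i x * sgn j x)
        = if i = j then ((2 : ℂ) ^ n) else 0 := by
      by_cases h : i = j
      · subst h
        rw [if_pos rfl]
        rw [Finset.sum_congr rfl (fun x _ => sgn_mul_self i x)]
        simp [Finset.card_univ]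
      · rw [if_neg h]
        have : ∃ k, i k ≠ j k := by
          by_contra hc; push_neg at hc; exact h (funext hc)
        obtain ⟨k, hk⟩ := this
        have hinv : Function.Involutive (GenStab.flip (n := n) k) := flip_flip k
        have hneg : ∀ x, sgn i (GenStab.flip k x) * sgn j (GenStab.flip k x)
            = -(sgn i x * sgn j x) := by
          intro x
          have h1 : (i k : ℕ) < 2 := (i k).isLt
          have h2 : (j k : ℕ) < 2 := (j k).isLt
          have h3 : (i k : ℕ) ≠ (j k : ℕ) := fun hc => hk (Fin.ext hc)
          have key : (-1 : ℂ) ^ (i k : ℕ) * (-1 : ℂ) ^ (j k : ℕ) = -1 := by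
            have ha : (i k : ℕ) = 0 ∨ (i k : ℕ) = 1 := by omega
            have hb : (j k : ℕ) = 0 ∨ (j k : ℕ) = 1 := by omega
            rcases ha with ha | ha <;> rcases hb with hb | hb <;>
              rw [ha, hb] <;> first | (exfalso; omega) | norm_num
          rw [sgn_flip, sgn_flip]
          linear_combination sgn i x * sgn j x * key
        have hrw : (∑ x : Fin n → Fin 2, sgn i x * sgn j x)
            = -(∑ x : Fin n → Fin 2, sgn i x * sgn j x) := by
          calc (∑ x : Fin n → Fin 2, sgn i x * sgn j x)
              = ∑ x : Fin n → Fin 2, sgn i (GenStab.flip k x) * sgn j (GenStab.flip k x) :=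
                (Fintype.sum_equiv hinv.toPerm _ _ (fun x => rfl)).symm
            _ = -(∑ x : Fin n → Fin 2, sgn i x * sgn j x) := by
                rw [Finset.sum_congr rfl (fun x _ => hneg x), Finset.sum_neg_distrib]
        linear_combination hrw / 2
    rw [hsum]
    have h2 : ((Real.sqrt 2 : ℝ) : ℂ) * ((Real.sqrt 2 : ℝ) : ℂ) = 2 := by
      have h2' : Real.sqrt 2 * Real.sqrt 2 = 2 := Real.mul_self_sqrt (by norm_num)
      exact_mod_cast h2'
    have hc2 : c * c * (2 : ℂ) ^ n = 1 := by
      rw [hc, ← mul_pow, ← mul_pow, ← mul_inv, h2, inv_mul_cancel₀ (two_ne_zero), one_pow]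
    by_cases h : i = j
    · rw [if_pos h, if_pos h]
      rw [show ((2:ℂ)^n) * (c * c) = c * c * 2^n by ring, hc2]
    · rw [if_neg h, if_neg h, zero_mul]
  refine ⟨?_, ?_, ?_, ?_, horth, ?_⟩
  · -- Hermitian
    intro k
    rw [Matrix.conjTranspose_mul, Matrix.conjTranspose_mul, Matrix.conjTranspose_conjTranspose,
      sigma1At_conjTranspose, Matrix.mul_assoc]
  · -- unitary
    intro k
    exact mul_mem (mul_mem hU (sigma1At_mem_unitary k)) (Unitary.star_mem hU)
  · -- commuting
    intro k k'
    have key : ∀ A B : Matrix (Fin n → Fin 2) (Fin n → Fin 2) ℂ,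
        (U * A * Uᴴ) * (U * B * Uᴴ) = U * (A * B) * Uᴴ := by
      intro A B
      calc (U * A * Uᴴ) * (U * B * Uᴴ) = U * (A * ((Uᴴ * U) * (B * Uᴴ))) := by
            simp only [Matrix.mul_assoc]
        _ = U * (A * (B * Uᴴ)) := by rw [hU1, one_mul]
        _ = U * (A * B) * Uᴴ := by simp only [Matrix.mul_assoc]
    rw [key, key, sigma1At_comm]
  · -- eigenvector equations
    intro k i
    funext x
    rw [← Matrix.mulVec_mulVec, ← Matrix.mulVec_mulVec]
    have hw : Uᴴ.mulVec ((sigma3Str n i).mulVec (U.mulVec (plusN n))) = fun y => sgn i y * c := by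
      funext y
      rw [hUH, Matrix.mulVec_diagonal, hv]
      rw [show star (u y) * (sgn i y * (u y * c)) = sgn i y * (star (u y) * u y * c) by ring,
        hnorm, one_mul]
    rw [hw]
    rw [Matrix.mulVec_mulVec, ← Matrix.mulVec_mulVec]
    have hs : (sigma1At n k).mulVec (fun y => sgn i y * c) = fun y => (-1 : ℂ) ^ (i k : ℕ) * (sgn i y * c) := by
      funext y
      rw [sigma1At_mulVec, sgn_flip]
      ring
    rw [hs]
    have hfin : U.mulVec (fun y => (-1 : ℂ) ^ (i k : ℕ) * (sgn i y * c)) x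
        = (-1 : ℂ) ^ (i k : ℕ) * (sgn i x * (u x * c)) := by
      rw [hUeq, Matrix.mulVec_diagonal]; ring
    rw [hfin, Pi.smul_apply, smul_eq_mul, hv]
  · exact horth.linearIndependent.span_eq_top_of_card_eq_finrank
      (by simp [finrank_euclideanSpace])

end
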